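/- Let $d\ge 3$ and $\mu>-1$. For $x=r\xi$, $y=s\varrho$ in $\mathbb{B}^d$ with $r=\|x\|$, $s=\|y\|$, $\xi,\varrho\in\mathbb{S}^{d-1}$, the reproducing kernel $\mathbb{K}_n(x,y)=\sum_{m=0}^n\sum_{j\le m/2}\sum_\nu P_{j,\nu}^m(x)P_{j,\nu}^m(y)/H_{j,\nu}^m$ of the classical ball polynomials satisfies $\mathbb{K}_n(x,y) = \frac{1}{c_\mu^d}\sum_{k=0}^n K^{(\mu,k+\delta)}_{\lfloor (n-k)/2\rfloor}(2r^2-1, 2s^2-1)\,(2rs)^k\,\frac{k+\delta}{\delta}\,C_k^\delta(\langle\xi,\varrho\rangle)$, where $\delta=(d-2)/2$ and $C_k^\delta$ are Gegenbauer polynomials. -/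

import Mathlib

open MeasureTheory Polynomial
open scoped RealInnerProductSpace

/-- Dimension `a_m^d` of the space of spherical harmonics of degree `m` in `d` variables. -/
def sphDim (d m : ℕ) : ℕ := (m + d - 1).choose (d - 1) - (m + d - 3).choose (d - 1)

/-- The Laplace operator on multivariate polynomials. -/
noncomputable def mvLaplacian {d : ℕ} (P : MvPolynomial (Fin d) ℝ) : MvPolynomial (Fin d) ℝ :=
  ∑ i : Fin d, MvPolynomial.pderiv i (MvPolynomial.pderiv i P)

/-- Surface area of the unit sphere `𝕊^{d-1}`. -/
noncomputable def sphereArea (d : ℕ) : ℝ := 2 * Real.pi ^ ((d : ℝ) / 2) / Real.Gamma (d / 2)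

/-- Normalization constant `ω_μ` for the ball weight. -/
noncomputable def omegaMu (d : ℕ) (μ : ℝ) : ℝ :=
  Real.pi ^ ((d : ℝ) / 2) * Real.Gamma (μ + 1) / Real.Gamma (μ + 1 + d / 2)

/-- The constant `c_μ^d = 2^{-μ-d/2-1} σ_{d-1}/ω_μ`. -/
noncomputable def cMuD (d : ℕ) (μ : ℝ) : ℝ :=
  2 ^ (-μ - (d : ℝ) / 2 - 1) * sphereArea d / omegaMu d μ


private lemma eval_mul_smul {σ : Type*} (φ : MvPolynomial σ ℝ) {n : ℕ} (hφ : φ.IsHomogeneous n)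
    (c : ℝ) (x : σ → ℝ) :
    MvPolynomial.eval (fun i => c * x i) φ = c ^ n * MvPolynomial.eval x φ := by
  rw [MvPolynomial.eval_eq, MvPolynomial.eval_eq, Finset.mul_sum]
  refine Finset.sum_congr rfl fun d hd => ?_
  have hdeg : d.degree = n := by
    by_contra hne; exact (MvPolynomial.mem_support_iff.mp hd) (hφ.coeff_eq_zero hne)
  simp_rw [mul_pow]
  rw [Finset.prod_mul_distrib, Finset.prod_pow_eq_pow_sum]
  have hs : ∑ i ∈ d.support, d i = n := by rw [← hdeg]; rfl
  rw [hs]; ring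

private lemma reindex_sum (n : ℕ) (g : ℕ → ℕ → ℝ) :
    ∑ m ∈ Finset.range (n + 1), ∑ j ∈ Finset.range (m / 2 + 1), g (m - 2 * j) j
    = ∑ k ∈ Finset.range (n + 1), ∑ j ∈ Finset.range ((n - k) / 2 + 1), g k j := by
  rw [Finset.sum_sigma', Finset.sum_sigma']
  refine Finset.sum_nbij' (fun p => ⟨p.1 - 2 * p.2, p.2⟩) (fun p => ⟨p.1 + 2 * p.2, p.2⟩)
    ?_ ?_ ?_ ?_ ?_
  · rintro ⟨a, b⟩ hab
    simp only [Finset.mem_sigma, Finset.mem_range] at hab ⊢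
    omega
  · rintro ⟨a, b⟩ hab
    simp only [Finset.mem_sigma, Finset.mem_range] at hab ⊢
    omega
  · rintro ⟨a, b⟩ hab
    simp only [Finset.mem_sigma, Finset.mem_range] at hab
    have : a - 2 * b + 2 * b = a := by omega
    simp [this]
  · rintro ⟨a, b⟩ hab
    have : a + 2 * b - 2 * b = a := by omega
    simp [this]
  · rintro ⟨a, b⟩ hab
    rfl

theorem ball_kernel_representation
    (d : ℕ) (hd : 3 ≤ d) (μ : ℝ) (hμ : -1 < μ)
    -- `δ = (d-2)/2`
    (δ : ℝ) (hδ : δ = ((d : ℝ) - 2) / 2)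
    -- an orthonormal basis of spherical harmonics of each degree
    (Y : ℕ → ℕ → MvPolynomial (Fin d) ℝ)
    (hYhom : ∀ m ν, ν < sphDim d m → (Y m ν).IsHomogeneous m)
    (hYharm : ∀ m ν, ν < sphDim d m → mvLaplacian (Y m ν) = 0)
    (hYortho : ∀ m ν m' ν', ν < sphDim d m → ν' < sphDim d m' →
      (sphereArea d)⁻¹ *
        ∫ ξ in Metric.sphere (0 : EuclideanSpace ℝ (Fin d)) 1,
          MvPolynomial.eval (fun i => ξ i) (Y m ν) * MvPolynomial.eval (fun i => ξ i) (Y m' ν')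
          ∂(μH[(d : ℝ) - 1]) = if m = m' ∧ ν = ν' then 1 else 0)
    -- Jacobi polynomials `P_j^{(μ,β)}`
    (J : ℝ → ℕ → Polynomial ℝ)
    (hJdeg : ∀ β j, (J β j).natDegree = j)
    (hJorth : ∀ β, -1 < β → ∀ j j', j ≠ j' →
      ∫ t in Set.Icc (-1 : ℝ) 1,
        (J β j).eval t * (J β j').eval t * ((1 - t) ^ μ * (1 + t) ^ β) = 0)
    -- the squared `L²` norms `h_j^{(μ,β)}`
    (h : ℝ → ℕ → ℝ)
    (hh : ∀ β j, h β j =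
      ∫ t in Set.Icc (-1 : ℝ) 1, ((J β j).eval t) ^ 2 * ((1 - t) ^ μ * (1 + t) ^ β))
    -- Gegenbauer polynomials `C_k^δ`
    (G : ℕ → Polynomial ℝ)
    (hGdeg : ∀ k, (G k).natDegree = k)
    (hGorth : ∀ k k', k ≠ k' →
      ∫ t in Set.Icc (-1 : ℝ) 1,
        (G k).eval t * (G k').eval t * (1 - t ^ 2) ^ (δ - 1 / 2) = 0)
    (hG1 : ∀ k, (G k).eval 1 = (∏ i ∈ Finset.range k, (2 * δ + i)) / k.factorial)
    -- the addition formula for spherical harmonics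
    (hadd : ∀ k : ℕ, ∀ ξ ∈ Metric.sphere (0 : EuclideanSpace ℝ (Fin d)) 1,
      ∀ ρ ∈ Metric.sphere (0 : EuclideanSpace ℝ (Fin d)) 1,
        ∑ ν ∈ Finset.range (sphDim d k),
            MvPolynomial.eval (fun i => ξ i) (Y k ν) * MvPolynomial.eval (fun i => ρ i) (Y k ν) =
          (((k : ℝ) + δ) / δ) * (G k).eval ⟪ξ, ρ⟫)
    (n : ℕ) (r s : ℝ) (hr : 0 ≤ r) (hr1 : r ≤ 1) (hs : 0 ≤ s) (hs1 : s ≤ 1)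
    (ξ ρ : EuclideanSpace ℝ (Fin d))
    (hξ : ξ ∈ Metric.sphere (0 : EuclideanSpace ℝ (Fin d)) 1)
    (hρ : ρ ∈ Metric.sphere (0 : EuclideanSpace ℝ (Fin d)) 1) :
    -- `𝕂_n(x,y)` for `x = rξ`, `y = sρ`
    (∑ m ∈ Finset.range (n + 1), ∑ j ∈ Finset.range (m / 2 + 1),
      ∑ ν ∈ Finset.range (sphDim d (m - 2 * j)),
        ((J (((m - 2 * j : ℕ) : ℝ) + δ) j).eval (2 * ‖r • ξ‖ ^ 2 - 1) *
            MvPolynomial.eval (fun i => (r • ξ) i) (Y (m - 2 * j) ν)) *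
        ((J (((m - 2 * j : ℕ) : ℝ) + δ) j).eval (2 * ‖s • ρ‖ ^ 2 - 1) *
            MvPolynomial.eval (fun i => (s • ρ) i) (Y (m - 2 * j) ν)) /
        (cMuD d μ / 2 ^ (m - 2 * j) * h (((m - 2 * j : ℕ) : ℝ) + δ) j)) =
    (cMuD d μ)⁻¹ *
      ∑ k ∈ Finset.range (n + 1),
        (∑ j ∈ Finset.range ((n - k) / 2 + 1),
            (J ((k : ℝ) + δ) j).eval (2 * r ^ 2 - 1) * (J ((k : ℝ) + δ) j).eval (2 * s ^ 2 - 1) /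
              h ((k : ℝ) + δ) j) *
          (2 * r * s) ^ k * (((k : ℝ) + δ) / δ) * (G k).eval ⟪ξ, ρ⟫ := by
  have hξ1 : ‖ξ‖ = 1 := mem_sphere_zero_iff_norm.mp hξ
  have hρ1 : ‖ρ‖ = 1 := mem_sphere_zero_iff_norm.mp hρ
  have hrn : ‖r • ξ‖ = r := by
    rw [norm_smul, hξ1, mul_one, Real.norm_of_nonneg hr]
  have hsn : ‖s • ρ‖ = s := by
    rw [norm_smul, hρ1, mul_one, Real.norm_of_nonneg hs]
  have hYr : ∀ k ν, ν < sphDim d k →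
      MvPolynomial.eval (fun i => (r • ξ) i) (Y k ν)
        = r ^ k * MvPolynomial.eval (fun i => ξ i) (Y k ν) := by
    intro k ν hν
    have hfun : (fun i => (r • ξ) i) = fun i => r * ξ i := by
      funext i; simp
    rw [hfun, eval_mul_smul _ (hYhom k ν hν)]
  have hYs : ∀ k ν, ν < sphDim d k →
      MvPolynomial.eval (fun i => (s • ρ) i) (Y k ν)
        = s ^ k * MvPolynomial.eval (fun i => ρ i) (Y k ν) := by
    intro k ν hν
    have hfun : (fun i => (s • ρ) i) = fun i => s * ρ i := by
      funext i; simp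
    rw [hfun, eval_mul_smul _ (hYhom k ν hν)]
  set g : ℕ → ℕ → ℝ := fun k j =>
    (cMuD d μ)⁻¹ *
      ((J ((k : ℝ) + δ) j).eval (2 * r ^ 2 - 1) * (J ((k : ℝ) + δ) j).eval (2 * s ^ 2 - 1) /
        h ((k : ℝ) + δ) j) * (2 * r * s) ^ k * (((k : ℝ) + δ) / δ) * (G k).eval ⟪ξ, ρ⟫ with hg
  have key : ∀ k j : ℕ,
      (∑ ν ∈ Finset.range (sphDim d k),
        ((J ((k : ℝ) + δ) j).eval (2 * ‖r • ξ‖ ^ 2 - 1) *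
            MvPolynomial.eval (fun i => (r • ξ) i) (Y k ν)) *
        ((J ((k : ℝ) + δ) j).eval (2 * ‖s • ρ‖ ^ 2 - 1) *
            MvPolynomial.eval (fun i => (s • ρ) i) (Y k ν)) /
        (cMuD d μ / 2 ^ k * h ((k : ℝ) + δ) j)) = g k j := by
    intro k j
    have step1 : (∑ ν ∈ Finset.range (sphDim d k),
        ((J ((k : ℝ) + δ) j).eval (2 * ‖r • ξ‖ ^ 2 - 1) *
            MvPolynomial.eval (fun i => (r • ξ) i) (Y k ν)) *
        ((J ((k : ℝ) + δ) j).eval (2 * ‖s • ρ‖ ^ 2 - 1) *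
            MvPolynomial.eval (fun i => (s • ρ) i) (Y k ν)) /
        (cMuD d μ / 2 ^ k * h ((k : ℝ) + δ) j))
        = ((J ((k : ℝ) + δ) j).eval (2 * r ^ 2 - 1) * (J ((k : ℝ) + δ) j).eval (2 * s ^ 2 - 1) *
            r ^ k * s ^ k / (cMuD d μ / 2 ^ k * h ((k : ℝ) + δ) j)) *
          ∑ ν ∈ Finset.range (sphDim d k),
            MvPolynomial.eval (fun i => ξ i) (Y k ν) * MvPolynomial.eval (fun i => ρ i) (Y k ν) := by
      rw [Finset.mul_sum]
      refine Finset.sum_congr rfl fun ν hν => ?_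
      rw [hrn, hsn, hYr k ν (Finset.mem_range.mp hν), hYs k ν (Finset.mem_range.mp hν)]
      ring
    rw [step1, hadd k ξ hξ ρ hρ, hg]
    simp only [div_eq_mul_inv, mul_inv, inv_inv]
    ring
  calc
    (∑ m ∈ Finset.range (n + 1), ∑ j ∈ Finset.range (m / 2 + 1),
      ∑ ν ∈ Finset.range (sphDim d (m - 2 * j)),
        ((J (((m - 2 * j : ℕ) : ℝ) + δ) j).eval (2 * ‖r • ξ‖ ^ 2 - 1) *
            MvPolynomial.eval (fun i => (r • ξ) i) (Y (m - 2 * j) ν)) *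
        ((J (((m - 2 * j : ℕ) : ℝ) + δ) j).eval (2 * ‖s • ρ‖ ^ 2 - 1) *
            MvPolynomial.eval (fun i => (s • ρ) i) (Y (m - 2 * j) ν)) /
        (cMuD d μ / 2 ^ (m - 2 * j) * h (((m - 2 * j : ℕ) : ℝ) + δ) j))
        = ∑ m ∈ Finset.range (n + 1), ∑ j ∈ Finset.range (m / 2 + 1), g (m - 2 * j) j :=
      Finset.sum_congr rfl fun m _ => Finset.sum_congr rfl fun j _ => key (m - 2 * j) j
    _ = ∑ k ∈ Finset.range (n + 1), ∑ j ∈ Finset.range ((n - k) / 2 + 1), g k j :=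
      reindex_sum n g
    _ = (cMuD d μ)⁻¹ *
      ∑ k ∈ Finset.range (n + 1),
        (∑ j ∈ Finset.range ((n - k) / 2 + 1),
            (J ((k : ℝ) + δ) j).eval (2 * r ^ 2 - 1) * (J ((k : ℝ) + δ) j).eval (2 * s ^ 2 - 1) /
              h ((k : ℝ) + δ) j) *
          (2 * r * s) ^ k * (((k : ℝ) + δ) / δ) * (G k).eval ⟪ξ, ρ⟫ := by
      rw [Finset.mul_sum]
      refine Finset.sum_congr rfl fun k _ => ?_
      rw [Finset.sum_mul, Finset.sum_mul, Finset.sum_mul, Finset.mul_sum]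
      exact Finset.sum_congr rfl fun j _ => by rw [hg]; ring
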